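/- Let (X_t) be a stationary Gaussian AR(1) process: X_t = φ X_{t-1} + ε_t with |φ| < 1 and ε_t i.i.d. N(0, σ²) independent of the past. Then the autocorrelation function of the process Y_t = X_t² is that of an AR(1) with coefficient φ², i.e. Corr(X_t², X_{t-l}²) = φ^{2l} for all l ≥ 0. -/

import Mathlib

open MeasureTheory ProbabilityTheory
open Real Set
open scoped NNReal ENNReal

lemma rpow_two_eq (x : ℝ) : x ^ (2:ℝ) = x ^ 2 := by
  rw [show (2:ℝ) = ((2:ℕ):ℝ) by norm_num, Real.rpow_natCast]

lemma rpow_four_eq (x : ℝ) : x ^ (4:ℝ) = x ^ 4 := by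
  rw [show (4:ℝ) = ((4:ℕ):ℝ) by norm_num, Real.rpow_natCast]

lemma gamma32 : Real.Gamma ((3:ℝ)/2) = Real.sqrt π / 2 := by
  rw [show (3:ℝ)/2 = 1/2 + 1 by norm_num, Real.Gamma_add_one (by norm_num),
    Real.Gamma_one_half_eq]
  ring

lemma gamma52 : Real.Gamma ((5:ℝ)/2) = 3 * Real.sqrt π / 4 := by
  rw [show (5:ℝ)/2 = 3/2 + 1 by norm_num, Real.Gamma_add_one (by norm_num), gamma32]
  ring

lemma int_sq {b : ℝ} (hb : 0 < b) :
    ∫ x : ℝ, x ^ 2 * Real.exp (-b * x ^ 2) = Real.sqrt π / 2 * b ^ (-(3:ℝ)/2) := by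
  have h := integral_rpow_mul_exp_neg_mul_rpow (p := 2) (q := 2) two_pos (by norm_num) hb
  have e1 : ∫ x : ℝ, x ^ 2 * Real.exp (-b * x ^ 2)
      = 2 * ∫ x in Ioi (0:ℝ), x ^ 2 * Real.exp (-b * x ^ 2) := by
    rw [← integral_comp_abs (f := fun y => y ^ 2 * Real.exp (-b * y ^ 2))]
    congr 1; ext x; simp [sq_abs]
  rw [e1]
  have e2 : ∫ x in Ioi (0:ℝ), x ^ 2 * Real.exp (-b * x ^ 2)
      = ∫ x in Ioi (0:ℝ), x ^ (2:ℝ) * Real.exp (-b * x ^ (2:ℝ)) := by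
    simp_rw [rpow_two_eq]
  rw [e2, h, show (-((2:ℝ)+1))/2 = -(3:ℝ)/2 by norm_num,
    show ((2:ℝ)+1)/2 = (3:ℝ)/2 by norm_num, gamma32]
  ring

lemma int_quart {b : ℝ} (hb : 0 < b) :
    ∫ x : ℝ, x ^ 4 * Real.exp (-b * x ^ 2) = 3 * Real.sqrt π / 4 * b ^ (-(5:ℝ)/2) := by
  have h := integral_rpow_mul_exp_neg_mul_rpow (p := 2) (q := 4) two_pos (by norm_num) hb
  have e1 : ∫ x : ℝ, x ^ 4 * Real.exp (-b * x ^ 2)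
      = 2 * ∫ x in Ioi (0:ℝ), x ^ 4 * Real.exp (-b * x ^ 2) := by
    rw [← integral_comp_abs (f := fun y => y ^ 4 * Real.exp (-b * y ^ 2))]
    congr 1; ext x
    rw [show |x| ^ 4 = (|x| ^ 2) ^ 2 by ring, sq_abs]; ring
  rw [e1]
  have e2 : ∫ x in Ioi (0:ℝ), x ^ 4 * Real.exp (-b * x ^ 2)
      = ∫ x in Ioi (0:ℝ), x ^ (4:ℝ) * Real.exp (-b * x ^ (2:ℝ)) := by
    simp_rw [rpow_two_eq, rpow_four_eq]
  rw [e2, h, show (-((4:ℝ)+1))/2 = -(5:ℝ)/2 by norm_num,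
    show ((4:ℝ)+1)/2 = (5:ℝ)/2 by norm_num, gamma52]
  ring

lemma pdf_formula {v : ℝ≥0} (x : ℝ) :
    gaussianPDFReal 0 v x = (Real.sqrt (2*π*(v:ℝ)))⁻¹ * Real.exp (-(2*(v:ℝ))⁻¹ * x ^ 2) := by
  simp only [gaussianPDFReal, sub_zero]
  rw [show -x^2/(2*(v:ℝ)) = -(2*(v:ℝ))⁻¹ * x^2 by ring]

lemma integrable_pow_gaussian (v : ℝ≥0) (n : ℕ) :
    Integrable (fun x : ℝ => x ^ n) (gaussianReal 0 v) := by
  by_cases hv : v = 0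
  · rw [hv, gaussianReal_zero_var]
    constructor
    · exact (measurable_id.pow_const n).aestronglyMeasurable
    · simp only [HasFiniteIntegral,
        lintegral_dirac' _ (show Measurable fun x:ℝ => (‖x ^ n‖₊:ℝ≥0∞) by measurability)]
      simp [lintegral_dirac]
  · have hvpos : (0:ℝ) < (v:ℝ) := by positivity
    have hb : (0:ℝ) < (2*(v:ℝ))⁻¹ := by positivity
    rw [gaussianReal_of_var_ne_zero 0 hv,
      show gaussianPDF 0 v = fun x => ((gaussianPDFReal 0 v x).toNNReal : ℝ≥0∞) from rfl,
      integrable_withDensity_iff_integrable_coe_smul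
        (measurable_gaussianPDFReal 0 v).real_toNNReal]
    have hint : Integrable (fun x : ℝ => x ^ n * Real.exp (-(2*(v:ℝ))⁻¹ * x ^ 2)) := by
      have h := integrable_rpow_mul_exp_neg_mul_sq hb (s := (n:ℝ)) (lt_of_lt_of_le (by norm_num) n.cast_nonneg)
      refine h.congr (Filter.Eventually.of_forall fun x => ?_)
      simp only [Real.rpow_natCast]
    refine (hint.const_mul (Real.sqrt (2*π*(v:ℝ)))⁻¹).congr
      (Filter.Eventually.of_forall fun x => ?_)
    show (Real.sqrt (2*π*(v:ℝ)))⁻¹ * (x ^ n * Real.exp (-(2*(v:ℝ))⁻¹ * x ^ 2))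
      = ((gaussianPDFReal 0 v x).toNNReal : ℝ) • x ^ n
    rw [smul_eq_mul, Real.coe_toNNReal _ (gaussianPDFReal_nonneg _ _ _), pdf_formula]
    ring

lemma g2 (r : ℝ) (hr : 0 ≤ r) : ∫ x, x ^ 2 ∂(gaussianReal 0 r.toNNReal) = r := by
  rcases eq_or_lt_of_le hr with h0 | hrpos
  · simp [← h0, gaussianReal_zero_var]
  · have hv : (r.toNNReal : ℝ≥0) ≠ 0 := by
      simp only [ne_eq, Real.toNNReal_eq_zero, not_le]; exact hrpos
    have h2r : (0:ℝ) < 2*r := by linarith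
    have hb : (0:ℝ) < (2*r)⁻¹ := by positivity
    rw [gaussianReal_of_var_ne_zero 0 hv,
      show gaussianPDF 0 r.toNNReal = fun x => ((gaussianPDFReal 0 r.toNNReal x).toNNReal : ℝ≥0∞)
        from rfl,
      integral_withDensity_eq_integral_smul (measurable_gaussianPDFReal 0 _).real_toNNReal]
    have e : ∀ x : ℝ, (gaussianPDFReal 0 r.toNNReal x).toNNReal • x ^ 2
        = (Real.sqrt (2*π*r))⁻¹ * (x ^ 2 * Real.exp (-(2*r)⁻¹ * x ^ 2)) := by
      intro x
      rw [NNReal.smul_def, smul_eq_mul, Real.coe_toNNReal _ (gaussianPDFReal_nonneg _ _ _),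
        pdf_formula, Real.coe_toNNReal r hr]
      ring
    simp_rw [e]
    rw [integral_const_mul, int_sq hb]
    have e1 : ((2*r)⁻¹ : ℝ) ^ (-(3:ℝ)/2) = (2*r) ^ ((3:ℝ)/2) := by
      rw [show (-(3:ℝ)/2) = -((3:ℝ)/2) by norm_num, Real.inv_rpow h2r.le,
        Real.rpow_neg h2r.le, inv_inv]
    have e2 : ((2*r) : ℝ) ^ ((3:ℝ)/2) = (2*r) * Real.sqrt (2*r) := by
      rw [show (3:ℝ)/2 = 1 + 1/2 by norm_num, Real.rpow_add h2r, Real.rpow_one,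
        ← Real.sqrt_eq_rpow]
    have e3 : Real.sqrt (2*π*r) = Real.sqrt π * Real.sqrt (2*r) := by
      rw [show 2*π*r = π * (2*r) by ring, Real.sqrt_mul Real.pi_pos.le]
    rw [e1, e2, e3]
    have hπ : (0:ℝ) < Real.sqrt π := Real.sqrt_pos.mpr Real.pi_pos
    have hs : (0:ℝ) < Real.sqrt (2*r) := Real.sqrt_pos.mpr h2r
    have hss : Real.sqrt (2*r) * Real.sqrt (2*r) = 2*r := Real.mul_self_sqrt h2r.le
    field_simp

lemma g4 (r : ℝ) (hr : 0 ≤ r) : ∫ x, x ^ 4 ∂(gaussianReal 0 r.toNNReal) = 3 * r ^ 2 := by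
  rcases eq_or_lt_of_le hr with h0 | hrpos
  · simp [← h0, gaussianReal_zero_var]
  · have hv : (r.toNNReal : ℝ≥0) ≠ 0 := by
      simp only [ne_eq, Real.toNNReal_eq_zero, not_le]; exact hrpos
    have h2r : (0:ℝ) < 2*r := by linarith
    have hb : (0:ℝ) < (2*r)⁻¹ := by positivity
    rw [gaussianReal_of_var_ne_zero 0 hv,
      show gaussianPDF 0 r.toNNReal = fun x => ((gaussianPDFReal 0 r.toNNReal x).toNNReal : ℝ≥0∞)
        from rfl,
      integral_withDensity_eq_integral_smul (measurable_gaussianPDFReal 0 _).real_toNNReal]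
    have e : ∀ x : ℝ, (gaussianPDFReal 0 r.toNNReal x).toNNReal • x ^ 4
        = (Real.sqrt (2*π*r))⁻¹ * (x ^ 4 * Real.exp (-(2*r)⁻¹ * x ^ 2)) := by
      intro x
      rw [NNReal.smul_def, smul_eq_mul, Real.coe_toNNReal _ (gaussianPDFReal_nonneg _ _ _),
        pdf_formula, Real.coe_toNNReal r hr]
      ring
    simp_rw [e]
    rw [integral_const_mul, int_quart hb]
    have e1 : ((2*r)⁻¹ : ℝ) ^ (-(5:ℝ)/2) = (2*r) ^ ((5:ℝ)/2) := by
      rw [show (-(5:ℝ)/2) = -((5:ℝ)/2) by norm_num, Real.inv_rpow h2r.le,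
        Real.rpow_neg h2r.le, inv_inv]
    have e2 : ((2*r) : ℝ) ^ ((5:ℝ)/2) = (2*r) ^ 2 * Real.sqrt (2*r) := by
      rw [show (5:ℝ)/2 = 2 + 1/2 by norm_num, Real.rpow_add h2r, ← Real.sqrt_eq_rpow,
        rpow_two_eq]
    have e3 : Real.sqrt (2*π*r) = Real.sqrt π * Real.sqrt (2*r) := by
      rw [show 2*π*r = π * (2*r) by ring, Real.sqrt_mul Real.pi_pos.le]
    rw [e1, e2, e3]
    have hπ : (0:ℝ) < Real.sqrt π := Real.sqrt_pos.mpr Real.pi_pos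
    have hs : (0:ℝ) < Real.sqrt (2*r) := Real.sqrt_pos.mpr h2r
    have hss : Real.sqrt (2*r) * Real.sqrt (2*r) = 2*r := Real.mul_self_sqrt h2r.le
    field_simp
    nlinarith [hss, hπ, hs]

/-- for a zero-mean stationary Gaussian AR(1) process `X` with coefficient
`|φ| < 1` and innovation variance `σ² > 0` (so that every pair `(X_t, X_{t-l})` is jointly
Gaussian with `Var(X_t) = σ²/(1-φ²)` and `Cov(X_t, X_{t-l}) = φ^l σ²/(1-φ²)`), the
correlation of the squared process satisfies `Corr(X_t², X_{t-l}²) = φ^{2l}`, i.e. the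
autocorrelation function of `X²` is that of an AR(1) with coefficient `φ²`. -/
theorem stmt7 {Ω : Type*} [MeasurableSpace Ω] (μ : Measure Ω) [IsProbabilityMeasure μ]
    (X : ℤ → Ω → ℝ) (φ σ : ℝ) (hφ : |φ| < 1) (hσ : 0 < σ)
    (hmeas : ∀ t, Measurable (X t))
    (hgauss : ∀ (t : ℤ) (l : ℕ) (a b : ℝ),
      Measure.map (fun ω => a * X t ω + b * X (t - l) ω) μ =
        gaussianReal 0
          (((a ^ 2 + b ^ 2) * σ ^ 2 / (1 - φ ^ 2) +
              2 * a * b * φ ^ l * σ ^ 2 / (1 - φ ^ 2)).toNNReal)) :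
    ∀ (t : ℤ) (l : ℕ),
      ((∫ ω, (X t ω) ^ 2 * (X (t - l) ω) ^ 2 ∂μ) -
          (∫ ω, (X t ω) ^ 2 ∂μ) * (∫ ω, (X (t - l) ω) ^ 2 ∂μ)) /
        (Real.sqrt ((∫ ω, (X t ω) ^ 4 ∂μ) - (∫ ω, (X t ω) ^ 2 ∂μ) ^ 2) *
          Real.sqrt ((∫ ω, (X (t - l) ω) ^ 4 ∂μ) - (∫ ω, (X (t - l) ω) ^ 2 ∂μ) ^ 2)) =
      φ ^ (2 * l) := by
  intro t l
  have hφ2 : φ ^ 2 < 1 := by nlinarith [abs_nonneg φ, sq_abs φ]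
  have h1φ : 0 < 1 - φ ^ 2 := by linarith
  set v : ℝ := σ ^ 2 / (1 - φ ^ 2) with hv
  have hvpos : 0 < v := by positivity
  set c : ℝ := φ ^ l with hc
  have hc1 : |c| ≤ 1 := by rw [hc, abs_pow]; exact pow_le_one₀ (abs_nonneg φ) hφ.le
  have hcl := abs_le.mp hc1
  have hLm : ∀ a b : ℝ, Measurable (fun ω => a * X t ω + b * X (t - (l:ℤ)) ω) :=
    fun a b => ((hmeas t).const_mul a).add ((hmeas _).const_mul b)
  have hval : ∀ (a b : ℝ) (n : ℕ), ∫ ω, (a * X t ω + b * X (t - (l:ℤ)) ω) ^ n ∂μ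
      = ∫ x, x ^ n ∂(gaussianReal 0
        (((a ^ 2 + b ^ 2) * σ ^ 2 / (1 - φ ^ 2) +
          2 * a * b * φ ^ l * σ ^ 2 / (1 - φ ^ 2)).toNNReal)) := by
    intro a b n
    rw [← hgauss t l a b]
    exact (integral_map (f := fun x : ℝ => x ^ n) (hLm a b).aemeasurable
      (measurable_id.pow_const n).aestronglyMeasurable).symm
  have hint : ∀ (a b : ℝ) (n : ℕ),
      Integrable (fun ω => (a * X t ω + b * X (t - (l:ℤ)) ω) ^ n) μ := by
    intro a b n
    have h1 : Integrable (fun x : ℝ => x ^ n)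
        (Measure.map (fun ω => a * X t ω + b * X (t - (l:ℤ)) ω) μ) := by
      rw [hgauss t l a b]; exact integrable_pow_gaussian _ n
    exact (integrable_map_measure (measurable_id.pow_const n).aestronglyMeasurable
      (hLm a b).aemeasurable).mp h1
  -- variance arguments
  have harg10 : ((1:ℝ) ^ 2 + 0 ^ 2) * σ ^ 2 / (1 - φ ^ 2)
      + 2 * 1 * 0 * φ ^ l * σ ^ 2 / (1 - φ ^ 2) = v := by rw [hv]; ring
  have harg01 : ((0:ℝ) ^ 2 + 1 ^ 2) * σ ^ 2 / (1 - φ ^ 2)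
      + 2 * 0 * 1 * φ ^ l * σ ^ 2 / (1 - φ ^ 2) = v := by rw [hv]; ring
  have harg11 : ((1:ℝ) ^ 2 + 1 ^ 2) * σ ^ 2 / (1 - φ ^ 2)
      + 2 * 1 * 1 * φ ^ l * σ ^ 2 / (1 - φ ^ 2) = 2 * (1 + c) * v := by rw [hv, hc]; ring
  have harg1m : ((1:ℝ) ^ 2 + (-1) ^ 2) * σ ^ 2 / (1 - φ ^ 2)
      + 2 * 1 * (-1) * φ ^ l * σ ^ 2 / (1 - φ ^ 2) = 2 * (1 - c) * v := by rw [hv, hc]; ring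
  -- moments in (a,b)-form
  have hU2' : ∫ ω, (1 * X t ω + 0 * X (t - (l:ℤ)) ω) ^ 2 ∂μ = v := by
    rw [hval 1 0 2, harg10, g2 v hvpos.le]
  have hV2' : ∫ ω, (0 * X t ω + 1 * X (t - (l:ℤ)) ω) ^ 2 ∂μ = v := by
    rw [hval 0 1 2, harg01, g2 v hvpos.le]
  have hU4' : ∫ ω, (1 * X t ω + 0 * X (t - (l:ℤ)) ω) ^ 4 ∂μ = 3 * v ^ 2 := by
    rw [hval 1 0 4, harg10, g4 v hvpos.le]
  have hV4' : ∫ ω, (0 * X t ω + 1 * X (t - (l:ℤ)) ω) ^ 4 ∂μ = 3 * v ^ 2 := by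
    rw [hval 0 1 4, harg01, g4 v hvpos.le]
  have hP4 : ∫ ω, (1 * X t ω + 1 * X (t - (l:ℤ)) ω) ^ 4 ∂μ = 3 * (2 * (1 + c) * v) ^ 2 := by
    rw [hval 1 1 4, harg11, g4 _ (by nlinarith)]
  have hM4 : ∫ ω, (1 * X t ω + (-1) * X (t - (l:ℤ)) ω) ^ 4 ∂μ = 3 * (2 * (1 - c) * v) ^ 2 := by
    rw [hval 1 (-1) 4, harg1m, g4 _ (by nlinarith)]
  -- simplified moments
  have hU2 : ∫ ω, (X t ω) ^ 2 ∂μ = v := by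
    rw [← hU2']; congr 1; ext ω; ring
  have hV2 : ∫ ω, (X (t - (l:ℤ)) ω) ^ 2 ∂μ = v := by
    rw [← hV2']; congr 1; ext ω; ring
  have hU4 : ∫ ω, (X t ω) ^ 4 ∂μ = 3 * v ^ 2 := by
    rw [← hU4']; congr 1; ext ω; ring
  have hV4 : ∫ ω, (X (t - (l:ℤ)) ω) ^ 4 ∂μ = 3 * v ^ 2 := by
    rw [← hV4']; congr 1; ext ω; ring
  -- cross moment
  have hcross : ∫ ω, (X t ω) ^ 2 * (X (t - (l:ℤ)) ω) ^ 2 ∂μ = v ^ 2 + 2 * v ^ 2 * c ^ 2 := by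
    have hid : (fun ω => (X t ω) ^ 2 * (X (t - (l:ℤ)) ω) ^ 2)
        = fun ω => (((1 * X t ω + 1 * X (t - (l:ℤ)) ω) ^ 4
            + (1 * X t ω + (-1) * X (t - (l:ℤ)) ω) ^ 4)
          - (2 * (1 * X t ω + 0 * X (t - (l:ℤ)) ω) ^ 4
            + 2 * (0 * X t ω + 1 * X (t - (l:ℤ)) ω) ^ 4)) / 12 := by
      ext ω; ring
    rw [show ∫ ω, (X t ω) ^ 2 * (X (t - (l:ℤ)) ω) ^ 2 ∂μ
        = ∫ ω, (((1 * X t ω + 1 * X (t - (l:ℤ)) ω) ^ 4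
            + (1 * X t ω + (-1) * X (t - (l:ℤ)) ω) ^ 4)
          - (2 * (1 * X t ω + 0 * X (t - (l:ℤ)) ω) ^ 4
            + 2 * (0 * X t ω + 1 * X (t - (l:ℤ)) ω) ^ 4)) / 12 ∂μ from by rw [hid]]
    have i1 : Integrable (fun ω => (1 * X t ω + 1 * X (t - (l:ℤ)) ω) ^ 4
        + (1 * X t ω + (-1) * X (t - (l:ℤ)) ω) ^ 4) μ := (hint 1 1 4).add (hint 1 (-1) 4)
    have i2 : Integrable (fun ω => 2 * (1 * X t ω + 0 * X (t - (l:ℤ)) ω) ^ 4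
        + 2 * (0 * X t ω + 1 * X (t - (l:ℤ)) ω) ^ 4) μ :=
      ((hint 1 0 4).const_mul 2).add ((hint 0 1 4).const_mul 2)
    rw [integral_div, integral_sub i1 i2,
      integral_add (hint 1 1 4) (hint 1 (-1) 4),
      integral_add ((hint 1 0 4).const_mul 2) ((hint 0 1 4).const_mul 2),
      integral_const_mul, integral_const_mul, hP4, hM4, hU4', hV4']
    ring
  rw [hcross, hU2, hV2, hU4, hV4]
  have h2v : (3 * v ^ 2 - v ^ 2) = 2 * v ^ 2 := by ring
  rw [h2v, Real.mul_self_sqrt (by positivity)]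
  rw [show (2 * l) = l * 2 by ring, pow_mul, ← hc]
  field_simp
  ring
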